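/- Let A be a commutative arithmetical uniform ring such that A modulo its nilradical P is finite-dimensional, and suppose A has no idempotent proper essential ideal. Then the nilradical P is nilpotent. -/

import Mathlib

open MulOpposite

/-- Deviation (Gabriel–Rentschler Krull dimension) of a preorder is `≤ α`:
in every strictly descending chain, all but finitely many of the
intervals (corresponding to successive factor modules) have deviation `< α`. -/
def DevLE (α : Ordinal.{0}) (P : Type) (inst : Preorder P) : Prop :=
  ∀ f : ℕ → P, (∀ n : ℕ, inst.lt (f (n + 1)) (f n)) →
    ∃ N : ℕ, ∀ n : ℕ, N ≤ n → ∃ β : Ordinal.{0}, ∃ _ : β < α,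
      DevLE β {x : P // inst.le (f (n + 1)) x ∧ inst.le x (f n)}
        (@Subtype.preorder P inst fun x => inst.le (f (n + 1)) x ∧ inst.le x (f n))
termination_by α

/-- A preorder has Krull dimension (deviation) if its deviation exists as an ordinal. -/
def HasKdimO (P : Type) [inst : Preorder P] : Prop := ∃ α : Ordinal.{0}, DevLE α P inst

/-- A module has Gabriel–Rentschler Krull dimension: the deviation of its submodule
lattice exists (intervals of this lattice are the submodule lattices of the
subquotients, so this agrees with the transfinite definition via factor modules). -/
def ModHasKdim (R M : Type) [Ring R] [AddCommGroup M] [Module R M] : Prop :=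
  HasKdimO (Submodule R M)

/-- A complete lattice (of submodules/ideals) is finite-dimensional: it contains no
infinite independent family (direct sum) of nonzero elements. -/
def FinDimL (L : Type) [CompleteLattice L] : Prop :=
  ¬ ∃ f : ℕ → L, (∀ n, f n ≠ ⊥) ∧ ∀ n, f n ⊓ (⨆ m, ⨆ _ : m ≠ n, f m) = ⊥

/-- A commutative ring is arithmetical if its lattice of ideals is distributive. -/
def Arithmetical (A : Type) [CommRing A] : Prop :=
  ∀ I J K : Ideal A, I ⊓ (J ⊔ K) = I ⊓ J ⊔ I ⊓ K

/-- A commutative ring is uniform if any two nonzero ideals intersect nontrivially. -/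
def UniformRing (A : Type) [CommRing A] : Prop :=
  ∀ I J : Ideal A, I ≠ ⊥ → J ≠ ⊥ → I ⊓ J ≠ ⊥

/-- A commutative ring has no idempotent proper essential ideal. -/
def NoIdemEss (A : Type) [CommRing A] : Prop :=
  ∀ B : Ideal A, B ≠ ⊤ → (∀ C : Ideal A, C ≠ ⊥ → B ⊓ C ≠ ⊥) → B * B ≠ B

section Aux
variable {A : Type} [CommRing A]

lemma arith_pair (ha : Arithmetical A) (a b : A) :
    ∃ s t : A, s + t = 1 ∧ s * a ∈ Ideal.span {b} ∧ t * b ∈ Ideal.span {a} := by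
  have h := ha (Ideal.span {a + b}) (Ideal.span {a}) (Ideal.span {b})
  have hmem : a + b ∈ Ideal.span {a + b} ⊓ (Ideal.span {a} ⊔ Ideal.span {b}) := by
    refine Submodule.mem_inf.mpr ⟨Ideal.subset_span rfl, ?_⟩
    exact add_mem (Submodule.mem_sup_left (Ideal.subset_span rfl))
      (Submodule.mem_sup_right (Ideal.subset_span rfl))
  rw [h] at hmem
  obtain ⟨u, hu, v, hv, huv⟩ := Submodule.mem_sup.mp hmem
  obtain ⟨hu1, hu2⟩ := Submodule.mem_inf.mp hu
  obtain ⟨-, hv2⟩ := Submodule.mem_inf.mp hv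
  obtain ⟨β, hβ⟩ := Ideal.mem_span_singleton'.mp hu1
  obtain ⟨α, hα⟩ := Ideal.mem_span_singleton'.mp hu2
  obtain ⟨γ, hγ⟩ := Ideal.mem_span_singleton'.mp hv2
  refine ⟨1 - β, β, by ring, ?_, ?_⟩
  · exact Ideal.mem_span_singleton'.mpr ⟨γ - 1 + β, by linear_combination hγ + hβ + huv⟩
  · exact Ideal.mem_span_singleton'.mpr ⟨α - β, by linear_combination hα - hβ⟩

/-- The quotient by the nilradical is reduced (elementwise form). -/
lemma qred (w : A ⧸ nilradical A) (hw : w * w = 0) : w = 0 := by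
  obtain ⟨x, rfl⟩ := Ideal.Quotient.mk_surjective w
  rw [← map_mul, Ideal.Quotient.eq_zero_iff_mem] at hw
  obtain ⟨k, hk⟩ := mem_nilradical.mp hw
  rw [Ideal.Quotient.eq_zero_iff_mem]
  refine mem_nilradical.mpr ⟨2 * k, ?_⟩
  rw [pow_mul, pow_two]
  exact hk

/-- Elementwise comparability in the quotient. -/
lemma qarith (ha : Arithmetical A) (x y : A ⧸ nilradical A) :
    ∃ s t : A ⧸ nilradical A, s + t = 1 ∧ s * x ∈ Ideal.span {y} ∧ t * y ∈ Ideal.span {x} := by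
  obtain ⟨a, rfl⟩ := Ideal.Quotient.mk_surjective x
  obtain ⟨b, rfl⟩ := Ideal.Quotient.mk_surjective y
  obtain ⟨s, t, hst, h1, h2⟩ := arith_pair ha a b
  obtain ⟨c, hc⟩ := Ideal.mem_span_singleton'.mp h1
  obtain ⟨d, hd⟩ := Ideal.mem_span_singleton'.mp h2
  refine ⟨Ideal.Quotient.mk _ s, Ideal.Quotient.mk _ t, ?_, ?_, ?_⟩
  · rw [← map_add, hst, map_one]
  · exact Ideal.mem_span_singleton'.mpr ⟨Ideal.Quotient.mk _ c, by rw [← map_mul, ← map_mul, hc]⟩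
  · exact Ideal.mem_span_singleton'.mpr ⟨Ideal.Quotient.mk _ d, by rw [← map_mul, ← map_mul, hd]⟩

lemma ann_pair (ha : Arithmetical A) (x y : A ⧸ nilradical A) (hxy : x * y = 0) :
    ∃ s t : A ⧸ nilradical A, s + t = 1 ∧ s * x = 0 ∧ t * y = 0 := by
  obtain ⟨s, t, hst, h1, h2⟩ := qarith ha x y
  obtain ⟨c, hc⟩ := Ideal.mem_span_singleton'.mp h1
  obtain ⟨d, hd⟩ := Ideal.mem_span_singleton'.mp h2
  refine ⟨s, t, hst, qred _ ?_, qred _ ?_⟩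
  · linear_combination (-(s*x)) * hc + (c*s) * hxy
  · linear_combination (-(t*y)) * hd + (d*t) * hxy

lemma idem_pow (z : A) (hz : z * z = z) : ∀ k : ℕ, 1 ≤ k → z ^ k = z := by
  intro k hk
  induction k with
  | zero => omega
  | succ n ih =>
    rcases Nat.eq_or_lt_of_le hk with h | h
    · rw [← h, pow_one]
    · rw [pow_succ, ih (by omega), hz]

/-- No nontrivial idempotents in `A ⧸ nilradical A` when `A` is uniform. -/
lemma no_idem (hu : UniformRing A) [Nontrivial A]
    (z : A ⧸ nilradical A) (hz : z * z = z) : z = 0 ∨ z = 1 := by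
  obtain ⟨e, rfl⟩ := Ideal.Quotient.mk_surjective z
  have hx : e * e - e ∈ nilradical A := by
    rw [← Ideal.Quotient.eq_zero_iff_mem, map_sub, map_mul, hz, sub_self]
  obtain ⟨k, hk⟩ := mem_nilradical.mp hx
  have hk1 : 1 ≤ k := by
    by_contra h
    have : k = 0 := by omega
    rw [this, pow_zero] at hk
    exact one_ne_zero hk
  set g : A := e ^ k with hg
  set h : A := (1 - e) ^ k with hh
  have hgh : g * h = 0 := by
    rw [hg, hh, ← mul_pow]
    have : e * (1 - e) = -(e * e - e) := by ring
    rw [this, neg_pow, hk, mul_zero]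
  have hmku : (Ideal.Quotient.mk (nilradical A)) (g + h) = 1 := by
    have h1 : (Ideal.Quotient.mk (nilradical A)) g = Ideal.Quotient.mk _ e := by
      rw [hg, map_pow, idem_pow _ hz k hk1]
    have h2 : (Ideal.Quotient.mk (nilradical A)) h = 1 - Ideal.Quotient.mk _ e := by
      rw [hh, map_pow, map_sub, map_one]
      exact idem_pow _ (by linear_combination hz) k hk1
    rw [map_add, h1, h2]; ring
  have hunil : IsNilpotent (g + h - 1) := by
    refine mem_nilradical.mp ?_
    rw [← Ideal.Quotient.eq_zero_iff_mem, map_sub, hmku, map_one, sub_self]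
  have hunit : IsUnit (g + h) := by
    have := hunil.isUnit_add_one
    simpa using this
  obtain ⟨μ, hμ⟩ := hunit
  set v : A := ↑μ⁻¹ with hv
  have huv : (g + h) * v = 1 := by
    rw [hv, ← hμ, Units.mul_inv]
  set f : A := g * v with hf
  have hof : 1 - f = h * v := by
    rw [hf]; linear_combination -huv
  have hff : f * (1 - f) = 0 := by
    rw [hof, hf]
    calc g * v * (h * v) = g * h * (v * v) := by ring
    _ = 0 := by rw [hgh, zero_mul]
  have hfe : (Ideal.Quotient.mk (nilradical A)) f = Ideal.Quotient.mk _ e := by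
    have hmkv : (Ideal.Quotient.mk (nilradical A)) v = 1 := by
      have := congrArg (Ideal.Quotient.mk (nilradical A)) huv
      rw [map_mul, map_one, hmku, one_mul] at this
      exact this
    rw [hf, map_mul, hmkv, mul_one, hg, map_pow, idem_pow _ hz k hk1]
  have hcases : f = 0 ∨ 1 - f = 0 := by
    by_contra hcon
    push_neg at hcon
    obtain ⟨hf0, hf1⟩ := hcon
    have hsf : Ideal.span {f} ≠ (⊥ : Ideal A) := by
      rw [Ne, Ideal.span_singleton_eq_bot]; exact hf0
    have hsf1 : Ideal.span {1 - f} ≠ (⊥ : Ideal A) := by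
      rw [Ne, Ideal.span_singleton_eq_bot]; exact hf1
    refine hu _ _ hsf hsf1 ?_
    refine (Submodule.eq_bot_iff _).mpr ?_
    rintro w ⟨hw1, hw2⟩
    obtain ⟨c, hc⟩ := Ideal.mem_span_singleton'.mp hw1
    obtain ⟨d, hd⟩ := Ideal.mem_span_singleton'.mp hw2
    linear_combination (-(1-f))*hc + (-f)*hd + (c+d)*hff
  rcases hcases with h0 | h1
  · left; rw [← hfe, h0, map_zero]
  · right
    have : f = 1 := by linear_combination -h1
    rw [← hfe, this, map_one]

end Aux

section Seq
variable {A : Type} [CommRing A]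

/-- Extension step: a finite pairwise-annihilating family of nonzero elements of the
reduced quotient can be extended. -/
lemma ext_step (hu : UniformRing A) (ha : Arithmetical A) [Nontrivial A]
    (n : ℕ) (v : Fin (n + 2) → (A ⧸ nilradical A))
    (hv0 : ∀ i, v i ≠ 0) (hvp : ∀ i j, i ≠ j → v i * v j = 0) :
    ∃ c : A ⧸ nilradical A, c ≠ 0 ∧ ∀ i, c * v i = 0 := by
  have key : ∀ m : ℕ, m ≤ n + 1 → ∃ u : A ⧸ nilradical A,
      u * v 0 = 0 ∧ ∀ i : Fin (n + 2), 1 ≤ (i : ℕ) → (i : ℕ) ≤ m → (1 - u) * v i = 0 := by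
    intro m
    induction m with
    | zero => intro _; exact ⟨0, by rw [zero_mul], fun i h1 h2 => by omega⟩
    | succ m ih =>
      intro hm
      obtain ⟨u, hu0, hui⟩ := ih (by omega)
      set i0 : Fin (n + 2) := ⟨m + 1, by omega⟩ with hi0
      have hne : (0 : Fin (n + 2)) ≠ i0 := by
        intro hEq
        have := congrArg Fin.val hEq
        simp [hi0] at this
      obtain ⟨s, t, hst, hs, ht⟩ := ann_pair ha (v 0) (v i0) (hvp 0 i0 hne)
      refine ⟨1 - (1 - u) * t, ?_, ?_⟩
      · have h1 : 1 - (1 - u) * t = s + u * t := by linear_combination -hst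
        rw [h1, add_mul, mul_assoc]
        rw [hs]
        have : u * (t * v 0) = t * (u * v 0) := by ring
        rw [this, hu0, mul_zero, add_zero]
      · intro i h1 h2
        have h3 : 1 - (1 - (1 - u) * t) = (1 - u) * t := by ring
        rw [h3]
        rcases Nat.lt_or_ge (i : ℕ) (m + 1) with hlt | hge
        · have : (1 - u) * t * v i = t * ((1 - u) * v i) := by ring
          rw [this, hui i h1 (by omega), mul_zero]
        · have : i = i0 := by
            apply Fin.ext; simp [hi0]; omega
          rw [this]
          have h4 : (1 - u) * t * v i0 = (1 - u) * (t * v i0) := by ring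
          rw [h4, ht, mul_zero]
  obtain ⟨u, hu0, hui⟩ := key (n + 1) (le_refl _)
  refine ⟨u * (1 - u), ?_, ?_⟩
  · intro hc
    have hid : u * u = u := by linear_combination -hc
    rcases no_idem hu u hid with h0 | h1
    · have h2 : ((⟨1, by omega⟩ : Fin (n + 2)) : ℕ) = 1 := rfl
      have := hui ⟨1, by omega⟩ (by omega) (by omega)
      rw [h0, sub_zero, one_mul] at this
      exact hv0 _ this
    · rw [h1, one_mul] at hu0
      exact hv0 _ hu0
  · intro i
    rcases Nat.eq_zero_or_pos (i : ℕ) with h0 | hpos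
    · have : i = 0 := Fin.ext h0
      rw [this]
      have : u * (1 - u) * v 0 = (1 - u) * (u * v 0) := by ring
      rw [this, hu0, mul_zero]
    · have : u * (1 - u) * v i = u * ((1 - u) * v i) := by ring
      rw [this, hui i hpos (by omega), mul_zero]

end Seq

section Vec
variable (R : Type) [CommRing R]

private def GoodVec (n : ℕ) : Type :=
  {v : Fin (n + 2) → R // (∀ i, v i ≠ 0) ∧ ∀ i j, i ≠ j → v i * v j = 0}

variable {R}

private noncomputable def vecSeq
    (hext : ∀ n (v : Fin (n + 2) → R), (∀ i, v i ≠ 0) → (∀ i j, i ≠ j → v i * v j = 0) →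
      ∃ c : R, c ≠ 0 ∧ ∀ i, c * v i = 0)
    (v0 : GoodVec R 0) : ∀ n, GoodVec R n
  | 0 => v0
  | (n + 1) =>
    ⟨Fin.snoc (vecSeq hext v0 n).1
        (hext n (vecSeq hext v0 n).1 (vecSeq hext v0 n).2.1 (vecSeq hext v0 n).2.2).choose, by
      have hc := (hext n (vecSeq hext v0 n).1 (vecSeq hext v0 n).2.1 (vecSeq hext v0 n).2.2).choose_spec
      constructor
      · intro i
        refine Fin.lastCases ?_ ?_ i
        · rw [Fin.snoc_last]; exact hc.1
        · intro j; rw [Fin.snoc_castSucc]; exact (vecSeq hext v0 n).2.1 j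
      · intro i j hij
        rcases Fin.eq_castSucc_or_eq_last i with ⟨i', rfl⟩ | rfl <;>
          rcases Fin.eq_castSucc_or_eq_last j with ⟨j', rfl⟩ | rfl
        · rw [Fin.snoc_castSucc, Fin.snoc_castSucc]
          exact (vecSeq hext v0 n).2.2 i' j' (fun hEq => hij (by rw [hEq]))
        · rw [Fin.snoc_castSucc, Fin.snoc_last, mul_comm]; exact hc.2 i'
        · rw [Fin.snoc_last, Fin.snoc_castSucc]; exact hc.2 j'
        · exact absurd rfl hij⟩

private lemma vecSeq_succ
    (hext : ∀ n (v : Fin (n + 2) → R), (∀ i, v i ≠ 0) → (∀ i j, i ≠ j → v i * v j = 0) →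
      ∃ c : R, c ≠ 0 ∧ ∀ i, c * v i = 0)
    (v0 : GoodVec R 0) (n : ℕ) :
    (vecSeq hext v0 (n + 1)).1 = Fin.snoc (vecSeq hext v0 n).1
      (hext n (vecSeq hext v0 n).1 (vecSeq hext v0 n).2.1 (vecSeq hext v0 n).2.2).choose := rfl

private lemma vecSeq_stab
    (hext : ∀ n (v : Fin (n + 2) → R), (∀ i, v i ≠ 0) → (∀ i j, i ≠ j → v i * v j = 0) →
      ∃ c : R, c ≠ 0 ∧ ∀ i, c * v i = 0)
    (v0 : GoodVec R 0) : ∀ (k n : ℕ) (i : Fin (n + 2)),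
      (vecSeq hext v0 (n + k)).1 (Fin.castLE (by omega) i) = (vecSeq hext v0 n).1 i
  | 0, n, i => by
    congr 1
  | (k + 1), n, i => by
    have h1 : (Fin.castLE (by omega : n + 2 ≤ n + (k + 1) + 2) i)
        = Fin.castSucc (Fin.castLE (by omega : n + 2 ≤ n + k + 2) i) := by
      apply Fin.ext; simp
    rw [h1]
    show (vecSeq hext v0 ((n + k) + 1)).1 (Fin.castSucc (Fin.castLE (by omega) i)) = _
    rw [vecSeq_succ hext v0 (n + k), Fin.snoc_castSucc]
    exact vecSeq_stab hext v0 k n i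

end Vec

section Prime
variable {A : Type} [CommRing A]

private def annI (R : Type) [CommRing R] (z : R) : Ideal R where
  carrier := {w | w * z = 0}
  add_mem' := by
    intro a b hb hc
    simp only [Set.mem_setOf_eq] at *
    rw [add_mul, hb, hc, add_zero]
  zero_mem' := by simp
  smul_mem' := by
    intro c x hx
    simp only [smul_eq_mul, Set.mem_setOf_eq] at *
    rw [mul_assoc, hx, mul_zero]

lemma nil_prime (hu : UniformRing A) (ha : Arithmetical A)
    (hfd : FinDimL (Ideal (A ⧸ nilradical A))) [Nontrivial A] :
    (nilradical A).IsPrime := by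
  rw [← Ideal.Quotient.isDomain_iff_prime]
  have hnt : nilradical A ≠ ⊤ := by
    intro h
    have h1 : (1 : A) ∈ nilradical A := h ▸ Submodule.mem_top
    obtain ⟨k, hk⟩ := mem_nilradical.mp h1
    rw [one_pow] at hk
    exact one_ne_zero hk
  have : Nontrivial (A ⧸ nilradical A) := Ideal.Quotient.nontrivial_iff.mpr hnt
  have : NoZeroDivisors (A ⧸ nilradical A) := by
    constructor
    intro x y hxy
    by_contra hcon
    push_neg at hcon
    obtain ⟨hx0, hy0⟩ := hcon
    -- build the base vector
    have base : GoodVec (A ⧸ nilradical A) 0 := by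
      refine ⟨fun i => if (i : ℕ) = 0 then x else y, ?_, ?_⟩
      · intro i
        by_cases h : (i : ℕ) = 0 <;> simp [h, hx0, hy0]
      · intro i j hij
        have hi2 := i.isLt
        have hj2 := j.isLt
        have hvij : (i : ℕ) ≠ (j : ℕ) := fun h => hij (Fin.ext h)
        rcases Nat.eq_zero_or_pos (i : ℕ) with h0 | hpos
        · have hj : (j : ℕ) ≠ 0 := by omega
          simp [h0, hj, hxy]
        · have hi : (i : ℕ) ≠ 0 := by omega
          have hj : (j : ℕ) = 0 := by omega
          simp [hi, hj, mul_comm, hxy]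
    set F : ℕ → (A ⧸ nilradical A) :=
      fun n => (vecSeq (ext_step hu ha) base n).1 (Fin.last (n + 1)) with hF
    have hFne : ∀ n, F n ≠ 0 := fun n => (vecSeq (ext_step hu ha) base n).2.1 _
    have hFmul : ∀ m n, m < n → F m * F n = 0 := by
      intro m n hmn
      obtain ⟨k, rfl⟩ : ∃ k, n = m + (k + 1) := ⟨n - m - 1, by omega⟩
      have h1 := vecSeq_stab (ext_step hu ha) base (k + 1) m (Fin.last (m + 1))
      show (vecSeq (ext_step hu ha) base m).1 (Fin.last (m + 1)) *
        (vecSeq (ext_step hu ha) base (m + (k + 1))).1 (Fin.last (m + (k + 1) + 1)) = 0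
      rw [← h1]
      refine (vecSeq (ext_step hu ha) base (m + (k + 1))).2.2 _ _ ?_
      intro hEq
      have h2 := congrArg Fin.val hEq
      simp only [Fin.coe_castLE, Fin.val_last] at h2
      omega
    refine hfd ⟨fun n => Ideal.span {F n}, fun n => ?_, fun n => ?_⟩
    · rw [Ne, Ideal.span_singleton_eq_bot]; exact hFne n
    · refine le_antisymm ?_ bot_le
      rintro w ⟨hw1, hw2⟩
      obtain ⟨d, hd⟩ := Ideal.mem_span_singleton'.mp hw1
      have hwann : w ∈ annI (A ⧸ nilradical A) (F n) := by
        have hle : (⨆ m, ⨆ _ : m ≠ n, Ideal.span {F m}) ≤ annI (A ⧸ nilradical A) (F n) := by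
          refine iSup_le fun m => iSup_le fun hm => ?_
          rw [Ideal.span_le]
          rintro z rfl
          show F m * F n = 0
          rcases Nat.lt_or_ge m n with h | h
          · exact hFmul m n h
          · have : n < m := by omega
            rw [mul_comm]; exact hFmul n m this
        exact hle hw2
      have hwf : w * F n = 0 := hwann
      show w ∈ (⊥ : Ideal (A ⧸ nilradical A))
      rw [Ideal.mem_bot]
      refine qred w ?_
      calc w * w = d * (w * F n) := by rw [← hd]; ring
      _ = 0 := by rw [hwf, mul_zero]
  exact NoZeroDivisors.to_isDomain _

end Prime

section Main
variable {A : Type} [CommRing A]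

/-- Key divisibility: in an arithmetical ring with prime nilradical,
any element outside the nilradical divides every element of the nilradical,
with quotient in the nilradical. -/
lemma l1 (ha : Arithmetical A) (hP : (nilradical A).IsPrime)
    {s : A} (hs : s ∉ nilradical A) {x : A} (hx : x ∈ nilradical A) :
    ∃ y ∈ nilradical A, x = s * y := by
  obtain ⟨σ, τ, hστ, h1, h2⟩ := arith_pair ha x s
  have hτ : τ ∈ nilradical A := by
    obtain ⟨c, hc⟩ := Ideal.mem_span_singleton'.mp h2
    have : τ * s ∈ nilradical A := by
      rw [← hc]
      exact Ideal.mul_mem_left _ c hx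
    exact (hP.mem_or_mem this).resolve_right hs
  have hσu : IsUnit σ := by
    have : σ = 1 - τ := by linear_combination hστ
    rw [this]
    exact (mem_nilradical.mp hτ).isUnit_one_sub
  obtain ⟨ω, hω⟩ := hσu
  obtain ⟨c, hc⟩ := Ideal.mem_span_singleton'.mp h1
  have hxy : x = s * (↑ω⁻¹ * c) := by
    have h3 : (↑ω⁻¹ : A) * (σ * x) = x := by
      rw [← hω, ← mul_assoc, Units.inv_mul, one_mul]
    calc x = ↑ω⁻¹ * (σ * x) := h3.symm
    _ = ↑ω⁻¹ * (c * s) := by rw [hc]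
    _ = s * (↑ω⁻¹ * c) := by ring
  refine ⟨↑ω⁻¹ * c, ?_, hxy⟩
  have : s * (↑ω⁻¹ * c) ∈ nilradical A := hxy ▸ hx
  exact (hP.mem_or_mem this).resolve_left hs

/-- The kernel of localization at the nilradical prime. -/
private def Kid (hP : (nilradical A).IsPrime) : Ideal A where
  carrier := {x | ∃ s, s ∉ nilradical A ∧ s * x = 0}
  add_mem' := by
    rintro a b ⟨s, hs, hsa⟩ ⟨t, ht, htb⟩
    refine ⟨s * t, fun h => ((hP.mem_or_mem h).elim hs ht), ?_⟩
    calc s * t * (a + b) = t * (s * a) + s * (t * b) := by ring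
    _ = 0 := by rw [hsa, htb, mul_zero, mul_zero, add_zero]
  zero_mem' := by
    refine ⟨1, ?_, mul_zero 1⟩
    rw [← Ideal.ne_top_iff_one]
    exact hP.ne_top
  smul_mem' := by
    rintro c x ⟨s, hs, hsx⟩
    refine ⟨s, hs, ?_⟩
    calc s * (c • x) = c * (s * x) := by simp [smul_eq_mul]; ring
    _ = 0 := by rw [hsx, mul_zero]

lemma pk_zero (ha : Arithmetical A) (hP : (nilradical A).IsPrime)
    {x y : A} (hx : x ∈ nilradical A) (hy : y ∈ Kid hP) : x * y = 0 := by
  obtain ⟨t, ht, hty⟩ := hy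
  obtain ⟨x₁, hx₁, hx₁e⟩ := l1 ha hP ht hx
  rw [hx₁e]
  calc t * x₁ * y = x₁ * (t * y) := by ring
  _ = 0 := by rw [hty, mul_zero]

lemma l2 (ha : Arithmetical A) (hP : (nilradical A).IsPrime)
    {t : A} (ht : t ∉ nilradical A) {y : A} (hy : y ∈ nilradical A * nilradical A) :
    ∃ y₁ ∈ nilradical A * nilradical A, y = t * (t * y₁) := by
  refine Submodule.mul_induction_on hy ?_ ?_
  · intro p hp q hq
    obtain ⟨p₁, hp₁, hp₁e⟩ := l1 ha hP ht hp
    obtain ⟨q₁, hq₁, hq₁e⟩ := l1 ha hP ht hq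
    refine ⟨p₁ * q₁, Ideal.mul_mem_mul hp₁ hq₁, ?_⟩
    rw [hp₁e, hq₁e]; ring
  · rintro z w ⟨z₁, hz₁, rfl⟩ ⟨w₁, hw₁, rfl⟩
    refine ⟨z₁ + w₁, add_mem hz₁ hw₁, by ring⟩

theorem stmt6 (A : Type) [CommRing A] (ha : Arithmetical A) (hu : UniformRing A)
    (hfd : FinDimL (Ideal (A ⧸ nilradical A))) (hni : NoIdemEss A) :
    ∃ n : ℕ, 0 < n ∧ nilradical A ^ n = ⊥ := by
  by_cases htriv : Subsingleton A
  · refine ⟨1, one_pos, ?_⟩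
    rw [pow_one, eq_bot_iff]
    intro x _
    rw [Ideal.mem_bot]
    exact Subsingleton.elim x 0
  have : Nontrivial A := not_subsingleton_iff_nontrivial.mp htriv
  by_cases hP0 : nilradical A = ⊥
  · exact ⟨1, one_pos, by rw [pow_one, hP0]⟩
  set P := nilradical A with hPdef
  have hPtop : P ≠ ⊤ := by
    intro h
    have h1 : (1 : A) ∈ P := h ▸ Submodule.mem_top
    obtain ⟨k, hk⟩ := mem_nilradical.mp h1
    rw [one_pow] at hk
    exact one_ne_zero hk
  have hP : P.IsPrime := nil_prime hu ha hfd
  have NI : ∀ B : Ideal A, B ≠ ⊥ → B ≠ ⊤ → B * B ≠ B :=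
    fun B h1 h2 => hni B h2 (fun C hC => hu B C h1 hC)
  by_cases hcase : P ≤ P * P ⊔ Kid hP
  · -- idempotent square case
    have hKP : Kid hP * P ≤ ⊥ := by
      rw [Ideal.mul_le]
      intro k hk p hp
      rw [Ideal.mem_bot, mul_comm]
      exact pk_zero ha hP hp hk
    have h1 : P * P ≤ (P * P) * P := by
      calc P * P ≤ (P * P ⊔ Kid hP) * P := Ideal.mul_mono_left hcase
      _ = (P * P) * P ⊔ Kid hP * P := Ideal.sup_mul _ _ _
      _ ≤ (P * P) * P ⊔ ⊥ := sup_le_sup_left hKP _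
      _ = (P * P) * P := by rw [sup_bot_eq]
    have h2 : (P * P) * P = P * P := le_antisymm Ideal.mul_le_left h1
    have hidem : (P * P) * (P * P) = P * P := by
      have e1 : (P * P) * (P * P) = ((P * P) * P) * P := by ring
      rw [e1, h2, h2]
    by_cases hPP : P * P = ⊥
    · exact ⟨2, two_pos, by rw [pow_two, hPP]⟩
    · exfalso
      refine NI (P * P) hPP ?_ hidem
      intro h
      exact hPtop (top_le_iff.mp (h ▸ Ideal.mul_le_right))
  · -- principal-dominated case
    obtain ⟨a, haP, haN⟩ := SetLike.not_le_iff_exists.mp hcase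
    have hspan : P * P ≤ Ideal.span {a} := by
      intro y hy
      obtain ⟨σ, τ, hστ, h1, h2⟩ := arith_pair ha y a
      by_cases hτ : τ ∈ P
      · have hσu : IsUnit σ := by
          have : σ = 1 - τ := by linear_combination hστ
          rw [this]
          exact (mem_nilradical.mp hτ).isUnit_one_sub
        obtain ⟨ω, hω⟩ := hσu
        obtain ⟨c, hc⟩ := Ideal.mem_span_singleton'.mp h1
        refine Ideal.mem_span_singleton'.mpr ⟨↑ω⁻¹ * c, ?_⟩
        calc ↑ω⁻¹ * c * a = ↑ω⁻¹ * (c * a) := by ring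
        _ = ↑ω⁻¹ * (σ * y) := by rw [hc]
        _ = (↑ω⁻¹ * σ) * y := by ring
        _ = y := by rw [← hω, Units.inv_mul, one_mul]
      · exfalso
        obtain ⟨a₁, ha₁P, ha₁e⟩ := l1 ha hP hτ haP
        obtain ⟨y₁, hy₁P, hy₁e⟩ := l2 ha hP hτ hy
        obtain ⟨c, hc⟩ := Ideal.mem_span_singleton'.mp h2
        have hκ : a₁ - c * y₁ ∈ Kid hP := by
          refine ⟨τ * τ, fun h => ((hP.mem_or_mem h).elim hτ hτ), ?_⟩
          have hτa : τ * a = c * y := hc.symm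
          rw [ha₁e, hy₁e] at hτa
          linear_combination hτa
        refine haN ?_
        have : a = τ * (c * y₁) + τ * (a₁ - c * y₁) := by rw [ha₁e]; ring
        rw [this]
        refine add_mem ?_ ?_
        · exact Submodule.mem_sup_left (Ideal.mul_mem_left _ _ (Ideal.mul_mem_left _ _ hy₁P))
        · exact Submodule.mem_sup_right (Ideal.mul_mem_left _ _ hκ)
    obtain ⟨k, hk⟩ := mem_nilradical.mp haP
    have hk1 : k ≠ 0 := by
      intro h
      rw [h, pow_zero] at hk
      exact one_ne_zero hk
    refine ⟨2 * k, by omega, ?_⟩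
    have hpowle : ∀ m : ℕ, (P * P) ^ m ≤ Ideal.span {a} ^ m := by
      intro m
      induction m with
      | zero => simp
      | succ j ih =>
        rw [pow_succ, pow_succ]
        exact Ideal.mul_mono ih hspan
    have : P ^ (2 * k) ≤ Ideal.span {a} ^ k := by
      calc P ^ (2 * k) = (P ^ 2) ^ k := by rw [← pow_mul]
      _ = (P * P) ^ k := by rw [pow_two]
      _ ≤ Ideal.span {a} ^ k := hpowle k
    rw [Ideal.span_singleton_pow, hk, Ideal.span_singleton_eq_bot.mpr rfl] at this
    exact le_bot_iff.mp this

end Main
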